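/- Let f_1, …, f_k (k ≥ 2) be linearly independent holomorphic modular forms of weight m for a Fuchsian group of the first kind Γ. Then the Wronskian W(f_1,…,f_k) is a nonzero cusp form of weight k(m+k−1) for Γ. -/

import Mathlib

open UpperHalfPlane

/-- The extension (by junk value `0`) of a function on the upper half-plane to `ℂ`,
used to take complex derivatives. -/
noncomputable def ext (f : UpperHalfPlane → ℂ) : ℂ → ℂ :=
  fun z => if h : 0 < z.im then f ⟨z, h⟩ else 0

namespace WronskAux

open Complex Matrix Filter Asymptotics Finset Set

lemma itDW {s : Set ℂ} (hs : IsOpen s) (f : ℂ → ℂ) (n : ℕ) :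
    ∀ x ∈ s, iteratedDerivWithin n f s x = iteratedDeriv n f x := by
  induction n with
  | zero => intro x hx; simp
  | succ n ih =>
    intro x hx
    rw [iteratedDerivWithin_succ, derivWithin_of_isOpen hs hx,
      iteratedDeriv_succ]
    exact Filter.EventuallyEq.deriv_eq (Filter.eventuallyEq_of_mem (hs.mem_nhds hx) ih)

lemma anItD {s : Set ℂ} (hs : IsOpen s) {f : ℂ → ℂ}
    (hf : DifferentiableOn ℂ f s) (n : ℕ) : AnalyticOnNhd ℂ (iteratedDeriv n f) s := by
  induction n with
  | zero => simpa using hf.analyticOnNhd hs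
  | succ n ih => rw [iteratedDeriv_succ]; exact ih.deriv

lemma diffItD {s : Set ℂ} (hs : IsOpen s) {f : ℂ → ℂ}
    (hf : DifferentiableOn ℂ f s) (n : ℕ) : DifferentiableOn ℂ (iteratedDeriv n f) s :=
  (anItD hs hf n).differentiableOn

lemma itD_const (c : ℂ) (n : ℕ) (x : ℂ) :
    iteratedDeriv n (fun _ : ℂ => c) x = if n = 0 then c else 0 := by
  induction n generalizing c x with
  | zero => simp
  | succ n ih =>
    rw [iteratedDeriv_succ']
    simp only [deriv_const']
    simpa using ih 0 x

open Complex Matrix Filter Asymptotics Finset Set Metric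

/-- The half-plane -/
def S : Set ℂ := {z : ℂ | 0 < z.im}

lemma isOpen_S : IsOpen S := isOpen_lt continuous_const Complex.continuous_im

/-- filter of `im → ∞` on ℂ -/
def imF : Filter ℂ := Filter.comap Complex.im Filter.atTop

lemma eventually_imF {p : ℂ → Prop} : (∀ᶠ z in imF, p z) ↔ ∃ A : ℝ, ∀ z : ℂ, A ≤ z.im → p z := by
  rw [imF, Filter.eventually_comap, Filter.eventually_atTop]
  constructor
  · rintro ⟨A, hA⟩; exact ⟨A, fun z hz => hA z.im hz z rfl⟩
  · rintro ⟨A, hA⟩; exact ⟨A, fun b hb z hz => hA z (hz ▸ hb)⟩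

/-- explicitly bounded for large im -/
def ExBdd (h : ℂ → ℂ) : Prop := ∃ M A : ℝ, 0 < M ∧ 1 ≤ A ∧ ∀ z : ℂ, A ≤ z.im → ‖h z‖ ≤ M

def ZeroA (h : ℂ → ℂ) : Prop := Tendsto h imF (nhds 0)

lemma ExBdd.isBigO {h : ℂ → ℂ} (hb : ExBdd h) : h =O[imF] (fun _ => (1 : ℂ)) := by
  obtain ⟨M, A, hM, hA, hb⟩ := hb
  rw [Asymptotics.isBigO_iff]
  exact ⟨M, eventually_imF.2 ⟨A, fun z hz => by simpa using hb z hz⟩⟩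

lemma ZeroA.exBdd {h : ℂ → ℂ} (hz : ZeroA h) : ExBdd h := by
  have h1 : ∀ᶠ z in imF, ‖h z‖ ≤ 1 := by
    have hn : Tendsto (fun z => ‖h z‖) imF (nhds (0:ℝ)) := by simpa using hz.norm
    exact hn.eventually (eventually_le_nhds one_pos)
  obtain ⟨A, hA⟩ := eventually_imF.1 h1
  exact ⟨1, max A 1, one_pos, le_max_right _ _, fun z hz => hA z (le_trans (le_max_left _ _) hz)⟩

lemma zeroA_deriv {h : ℂ → ℂ} (hd : DifferentiableOn ℂ h S) (hb : ExBdd h) :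
    ZeroA (deriv h) := by
  obtain ⟨M, A, hM, hA, hb⟩ := hb
  rw [ZeroA, NormedAddCommGroup.tendsto_nhds_zero]
  intro ε hε
  set r : ℝ := 2 * M / ε with hr
  have hr0 : 0 < r := by positivity
  rw [eventually_imF]
  refine ⟨A + r + 1, fun z hz => ?_⟩
  have hsub : closedBall z r ⊆ {w : ℂ | A ≤ w.im} := by
    intro w hw
    rw [mem_closedBall] at hw
    have : |w.im - z.im| ≤ r := by
      calc |w.im - z.im| = |(w - z).im| := by simp [Complex.sub_im]
        _ ≤ ‖w - z‖ := Complex.abs_im_le_norm _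
        _ ≤ r := by rwa [dist_eq_norm] at hw
    have := abs_le.1 this
    simp only [Set.mem_setOf_eq]
    linarith
  have hsubS : closedBall z r ⊆ S := fun w hw => by
    have h1 : A ≤ w.im := hsub hw
    show 0 < w.im
    linarith
  have hdiff : DiffContOnCl ℂ h (ball z r) := by
    apply DifferentiableOn.diffContOnCl
    rw [closure_ball z hr0.ne']
    exact hd.mono hsubS
  have hC : ∀ w ∈ sphere z r, ‖h w‖ ≤ M := fun w hw =>
    hb w (hsub (sphere_subset_closedBall hw))
  have := Complex.norm_deriv_le_of_forall_mem_sphere_norm_le hr0 hdiff hC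
  calc ‖deriv h z‖ ≤ M / r := this
    _ = ε / 2 := by rw [hr]; field_simp
    _ < ε := by linarith

lemma exBdd_itD {h : ℂ → ℂ} (hd : DifferentiableOn ℂ h S) (hb : ExBdd h) :
    ∀ n : ℕ, ExBdd (iteratedDeriv n h) ∧ (1 ≤ n → ZeroA (iteratedDeriv n h)) := by
  intro n
  induction n with
  | zero => exact ⟨by simpa using hb, by omega⟩
  | succ n ih =>
    have hz : ZeroA (iteratedDeriv (n + 1) h) := by
      rw [iteratedDeriv_succ]
      exact zeroA_deriv (diffItD isOpen_S hd n) ih.1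
    exact ⟨hz.exBdd, fun _ => hz⟩

open Complex Matrix Filter Asymptotics Finset Set Metric

lemma bigO_prod {n : ℕ} (e : Fin n → ℂ → ℂ) (s : Finset (Fin n))
    (hb : ∀ i, (e i) =O[imF] (fun _ => (1 : ℂ))) :
    (fun z => ∏ i ∈ s, e i z) =O[imF] (fun _ => (1 : ℂ)) := by
  classical
  induction s using Finset.induction with
  | empty => simpa using isBigO_refl (fun _ : ℂ => (1:ℂ)) imF
  | insert a s' hx ih =>
    simp only [Finset.prod_insert hx]
    have := (hb a).mul ih
    simpa using this

lemma tendsto_prod_zero {n : ℕ} (e : Fin n → ℂ → ℂ) (i₀ : Fin n)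
    (hb : ∀ i, (e i) =O[imF] (fun _ => (1 : ℂ)))
    (h0 : Tendsto (e i₀) imF (nhds 0)) :
    Tendsto (fun z => ∏ i, e i z) imF (nhds 0) := by
  classical
  have heq : ∀ z, ∏ i, e i z = e i₀ z * ∏ i ∈ Finset.univ.erase i₀, e i z := by
    intro z
    rw [← Finset.mul_prod_erase Finset.univ (fun i => e i z) (Finset.mem_univ i₀)]
  have hO : (fun z => ∏ i ∈ Finset.univ.erase i₀, e i z) =O[imF] (fun _ => (1:ℂ)) :=
    bigO_prod e _ hb
  have ho : (e i₀) =o[imF] (fun _ => (1:ℂ)) := (Asymptotics.isLittleO_one_iff ℂ).2 h0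
  have := ho.mul_isBigO hO
  have h2 : (fun z => e i₀ z * ∏ i ∈ Finset.univ.erase i₀, e i z) =o[imF] (fun _ => (1:ℂ)) := by
    simpa using this
  have := (Asymptotics.isLittleO_one_iff ℂ).1 h2
  exact Tendsto.congr (fun z => (heq z).symm) this

lemma tendsto_det_zero {k : ℕ} (hk : 2 ≤ k) (g : Fin k → ℂ → ℂ)
    (hd : ∀ j, DifferentiableOn ℂ (g j) S) (hb : ∀ j, ExBdd (g j)) :
    Tendsto (fun z => Matrix.det (Matrix.of fun i j : Fin k => iteratedDeriv (i : ℕ) (g j) z))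
      imF (nhds 0) := by
  classical
  have hent : ∀ (j : Fin k) (n : ℕ), ExBdd (iteratedDeriv n (g j)) :=
    fun j n => (exBdd_itD (hd j) (hb j) n).1
  have hent0 : ∀ (j : Fin k) (n : ℕ), 1 ≤ n → ZeroA (iteratedDeriv n (g j)) :=
    fun j n hn => (exBdd_itD (hd j) (hb j) n).2 hn
  have hdet : ∀ z, Matrix.det (Matrix.of fun i j : Fin k => iteratedDeriv (i : ℕ) (g j) z)
      = ∑ σ : Equiv.Perm (Fin k), Equiv.Perm.sign σ •
          ∏ i, iteratedDeriv ((σ i : Fin k) : ℕ) (g i) z := by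
    intro z
    rw [Matrix.det_apply]
    rfl
  rw [show (fun z => Matrix.det (Matrix.of fun i j : Fin k => iteratedDeriv (i : ℕ) (g j) z))
      = fun z => ∑ σ : Equiv.Perm (Fin k), Equiv.Perm.sign σ •
          ∏ i, iteratedDeriv ((σ i : Fin k) : ℕ) (g i) z from funext hdet]
  have : Tendsto (fun z => ∑ σ : Equiv.Perm (Fin k), Equiv.Perm.sign σ •
      ∏ i, iteratedDeriv ((σ i : Fin k) : ℕ) (g i) z) imF (nhds 0) := by
    have h0 : (0 : ℂ) = ∑ σ : Equiv.Perm (Fin k), 0 := by simp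
    rw [h0]
    apply tendsto_finset_sum
    intro σ _
    set j₁ : Fin k := ⟨1, by omega⟩ with hj₁
    set i₀ : Fin k := σ.symm j₁ with hi₀
    have hσ : σ i₀ = j₁ := Equiv.apply_symm_apply σ j₁
    have hz : Tendsto (fun z => ∏ i, iteratedDeriv ((σ i : Fin k) : ℕ) (g i) z) imF (nhds 0) := by
      apply tendsto_prod_zero (fun i => iteratedDeriv ((σ i : Fin k) : ℕ) (g i)) i₀
      · intro i; exact (hent i _).isBigO
      · rw [hσ]
        exact hent0 i₀ 1 le_rfl
    have := hz.const_smul (Equiv.Perm.sign σ : ℤˣ)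
    simpa using this
  exact this
open Complex Matrix Filter Asymptotics Finset Set Metric

noncomputable def chA (u φ : ℂ → ℂ) : ℕ → ℕ → ℂ → ℂ
  | 0, 0 => u
  | 0, _ + 1 => fun _ => 0
  | i + 1, 0 => deriv (chA u φ i 0)
  | i + 1, l + 1 => fun z => deriv (chA u φ i (l + 1)) z + chA u φ i l z * deriv φ z

variable {s : Set ℂ} {u φ : ℂ → ℂ}

lemma chA_zero_of_lt (u φ : ℂ → ℂ) : ∀ i l : ℕ, i < l → chA u φ i l = fun _ => 0 := by
  intro i
  induction i with
  | zero => intro l hl; match l, hl with | l + 1, _ => rfl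
  | succ i ih =>
    intro l hl
    match l, hl with
    | l + 1, hl =>
      have h1 : chA u φ i (l + 1) = fun _ => 0 := ih (l + 1) (by omega)
      have h2 : chA u φ i l = fun _ => 0 := ih l (by omega)
      funext z
      show deriv (chA u φ i (l + 1)) z + chA u φ i l z * deriv φ z = 0
      rw [h1, h2]
      simp

lemma chA_diag (u φ : ℂ → ℂ) : ∀ i : ℕ, ∀ z : ℂ, chA u φ i i z = u z * (deriv φ z) ^ i := by
  intro i
  induction i with
  | zero => intro z; simp [chA]
  | succ i ih =>
    intro z
    show deriv (chA u φ i (i + 1)) z + chA u φ i i z * deriv φ z = _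
    rw [chA_zero_of_lt u φ i (i + 1) (by omega), ih z]
    simp [pow_succ, mul_assoc]

lemma chA_analytic (hs : IsOpen s) (hu : DifferentiableOn ℂ u s)
    (hφ : DifferentiableOn ℂ φ s) :
    ∀ i l : ℕ, AnalyticOnNhd ℂ (chA u φ i l) s := by
  intro i
  induction i with
  | zero =>
    intro l
    match l with
    | 0 => exact hu.analyticOnNhd hs
    | l + 1 => exact analyticOnNhd_const
  | succ i ih =>
    intro l
    match l with
    | 0 => exact (ih 0).deriv
    | l + 1 => exact ((ih (l + 1)).deriv).add ((ih l).mul (hφ.analyticOnNhd hs).deriv)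

lemma chA_formula (hs : IsOpen s) (hu : DifferentiableOn ℂ u s)
    (hφ : DifferentiableOn ℂ φ s) (hmaps : Set.MapsTo φ s s)
    {G : ℂ → ℂ} (hG : DifferentiableOn ℂ G s) :
    ∀ (i : ℕ) (z : ℂ), z ∈ s → iteratedDeriv i (fun w => u w * G (φ w)) z
      = ∑ l ∈ Finset.range (i + 1), chA u φ i l z * iteratedDeriv l G (φ z) := by
  intro i
  induction i with
  | zero => intro z hz; simp [chA]
  | succ i ih =>
    intro z hz
    rw [iteratedDeriv_succ]
    have heq : deriv (iteratedDeriv i fun w => u w * G (φ w)) z =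
        deriv (fun w => ∑ l ∈ Finset.range (i + 1), chA u φ i l w * iteratedDeriv l G (φ w)) z :=
      Filter.EventuallyEq.deriv_eq (Filter.eventuallyEq_of_mem (hs.mem_nhds hz) ih)
    rw [heq]
    -- derivative of the sum
    have hder : HasDerivAt (fun w => ∑ l ∈ Finset.range (i + 1),
        chA u φ i l w * iteratedDeriv l G (φ w))
        (∑ l ∈ Finset.range (i + 1),
          (deriv (chA u φ i l) z * iteratedDeriv l G (φ z)
            + chA u φ i l z * (iteratedDeriv (l + 1) G (φ z) * deriv φ z))) z := by
      apply HasDerivAt.fun_sum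
      intro l _
      have h1 : HasDerivAt (chA u φ i l) (deriv (chA u φ i l) z) z :=
        (((chA_analytic hs hu hφ i l) z hz).differentiableAt).hasDerivAt
      have hφ' : HasDerivAt φ (deriv φ z) z :=
        ((hφ.differentiableAt (hs.mem_nhds hz))).hasDerivAt
      have hG' : HasDerivAt (iteratedDeriv l G) (iteratedDeriv (l + 1) G (φ z)) (φ z) := by
        have hd : DifferentiableAt ℂ (iteratedDeriv l G) (φ z) :=
          ((anItD hs hG l) (φ z) (hmaps hz)).differentiableAt
        have := hd.hasDerivAt
        rwa [show deriv (iteratedDeriv l G) (φ z) = iteratedDeriv (l + 1) G (φ z) by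
          rw [iteratedDeriv_succ]] at this
      exact h1.mul (HasDerivAt.comp z hG' hφ')
    rw [hder.deriv]
    -- now rearrange the sum
    have hsplit : ∑ l ∈ Finset.range (i + 1),
        (deriv (chA u φ i l) z * iteratedDeriv l G (φ z)
          + chA u φ i l z * (iteratedDeriv (l + 1) G (φ z) * deriv φ z))
      = (∑ l ∈ Finset.range (i + 1), deriv (chA u φ i l) z * iteratedDeriv l G (φ z))
        + ∑ l ∈ Finset.range (i + 1),
            chA u φ i l z * (iteratedDeriv (l + 1) G (φ z) * deriv φ z) :=
      Finset.sum_add_distrib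
    rw [hsplit]
    -- RHS: split off l = 0 term
    rw [Finset.sum_range_succ' (fun l => chA u φ (i + 1) l z * iteratedDeriv l G (φ z)) (i + 1)]
    have hrhs1 : ∀ l, chA u φ (i + 1) (l + 1) z
        = deriv (chA u φ i (l + 1)) z + chA u φ i l z * deriv φ z := fun l => rfl
    have hrhs0 : chA u φ (i + 1) 0 z = deriv (chA u φ i 0) z := rfl
    -- first sum on LHS: split off l = 0, extend shifted part
    have hL1 : ∑ l ∈ Finset.range (i + 1), deriv (chA u φ i l) z * iteratedDeriv l G (φ z)
        = (∑ l ∈ Finset.range i, deriv (chA u φ i (l + 1)) z * iteratedDeriv (l + 1) G (φ z))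
          + deriv (chA u φ i 0) z * iteratedDeriv 0 G (φ z) :=
      Finset.sum_range_succ' (fun l => deriv (chA u φ i l) z * iteratedDeriv l G (φ z)) i
    have hext : ∑ l ∈ Finset.range i, deriv (chA u φ i (l + 1)) z * iteratedDeriv (l + 1) G (φ z)
        = ∑ l ∈ Finset.range (i + 1),
            deriv (chA u φ i (l + 1)) z * iteratedDeriv (l + 1) G (φ z) := by
      rw [Finset.sum_range_succ]
      rw [chA_zero_of_lt u φ i (i + 1) (by omega)]
      simp
    rw [hL1, hext]
    rw [Finset.sum_congr rfl (fun l (_ : l ∈ Finset.range (i + 1)) => by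
      rw [hrhs1 l] : ∀ l ∈ Finset.range (i + 1), chA u φ (i + 1) (l + 1) z
        * iteratedDeriv (l + 1) G (φ z)
        = (deriv (chA u φ i (l + 1)) z + chA u φ i l z * deriv φ z) * iteratedDeriv (l + 1) G (φ z))]
    rw [hrhs0]
    rw [Finset.sum_congr rfl (fun l _ => add_mul _ _ _), Finset.sum_add_distrib]
    rw [show (∑ l ∈ Finset.range (i + 1),
          chA u φ i l z * deriv φ z * iteratedDeriv (l + 1) G (φ z))
        = ∑ l ∈ Finset.range (i + 1),
          chA u φ i l z * (iteratedDeriv (l + 1) G (φ z) * deriv φ z) from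
      Finset.sum_congr rfl (fun l _ => by ring)]
    ring

open Complex Matrix Filter Asymptotics Finset Set Metric

lemma det_chain {s : Set ℂ} {u φ : ℂ → ℂ} (hs : IsOpen s) (hu : DifferentiableOn ℂ u s)
    (hφ : DifferentiableOn ℂ φ s) (hmaps : Set.MapsTo φ s s) {k : ℕ} (g : Fin k → ℂ → ℂ)
    (hg : ∀ j, DifferentiableOn ℂ (g j) s) {z : ℂ} (hz : z ∈ s) :
    Matrix.det (Matrix.of fun i j : Fin k => iteratedDeriv (i : ℕ) (fun w => u w * g j (φ w)) z)
      = (∏ i ∈ Finset.range k, (u z * (deriv φ z) ^ i)) *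
        Matrix.det (Matrix.of fun i j : Fin k => iteratedDeriv (i : ℕ) (g j) (φ z)) := by
  classical
  set L : Matrix (Fin k) (Fin k) ℂ :=
    Matrix.of fun i l : Fin k => chA u φ (i : ℕ) (l : ℕ) z with hL
  set N : Matrix (Fin k) (Fin k) ℂ :=
    Matrix.of fun l j : Fin k => iteratedDeriv (l : ℕ) (g j) (φ z) with hN
  have hM : (Matrix.of fun i j : Fin k =>
      iteratedDeriv (i : ℕ) (fun w => u w * g j (φ w)) z) = L * N := by
    ext i j
    rw [Matrix.mul_apply]
    show iteratedDeriv (i : ℕ) (fun w => u w * g j (φ w)) z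
      = ∑ l : Fin k, chA u φ (i : ℕ) (l : ℕ) z * iteratedDeriv (l : ℕ) (g j) (φ z)
    rw [chA_formula hs hu hφ hmaps (hg j) i z hz]
    rw [Fin.sum_univ_eq_sum_range (fun l => chA u φ (i : ℕ) l z * iteratedDeriv l (g j) (φ z)) k]
    apply Finset.sum_subset
    · exact Finset.range_subset_range.2 (by have := i.2; omega)
    · intro l hl hnl
      rw [Finset.mem_range, not_lt] at hnl
      rw [chA_zero_of_lt u φ (i : ℕ) l (by omega)]
      simp
  rw [hM, Matrix.det_mul]
  congr 1
  have htri : L.BlockTriangular OrderDual.toDual := by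
    intro i l h
    have : (i : ℕ) < (l : ℕ) := h
    show chA u φ (i : ℕ) (l : ℕ) z = 0
    rw [chA_zero_of_lt u φ _ _ this]
  rw [Matrix.det_of_lowerTriangular L htri]
  rw [show (∏ i : Fin k, L i i) = ∏ i : Fin k, (u z * (deriv φ z) ^ (i : ℕ)) from
    Finset.prod_congr rfl (fun i _ => chA_diag u φ (i : ℕ) z)]
  exact Fin.prod_univ_eq_prod_range (fun i => u z * (deriv φ z) ^ i) k

open Complex Matrix Filter Asymptotics Finset Set Metric

theorem wronskian_ne_zero : ∀ (k : ℕ) (U : Set ℂ), IsOpen U → IsPreconnected U →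
    U.Nonempty → ∀ g : Fin k → ℂ → ℂ, (∀ j, DifferentiableOn ℂ (g j) U) →
    (∀ z ∈ U, Matrix.det (Matrix.of fun i j : Fin k => iteratedDeriv (i : ℕ) (g j) z) = 0) →
    ∃ c : Fin k → ℂ, c ≠ 0 ∧ ∀ z ∈ U, ∑ j, c j * g j z = 0 := by
  intro k
  induction k with
  | zero =>
    rintro U hU hUc ⟨z, hz⟩ g hd hW
    exact absurd (hW z hz) (by simp [Matrix.det_fin_zero])
  | succ n IH =>
    intro U hU hUc hne g hd hW
    by_cases hg0 : ∀ z ∈ U, g 0 z = 0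
    · refine ⟨Pi.single 0 1, ?_, fun z hz => ?_⟩
      · intro h
        have := congrFun h 0
        simp [Pi.single_eq_same] at this
      · rw [Finset.sum_eq_single 0 (fun j _ hj => by simp [Pi.single_eq_of_ne hj]) (by simp)]
        simp [Pi.single_eq_same, hg0 z hz]
    · push_neg at hg0
      obtain ⟨z₀, hz₀U, hz₀⟩ := hg0
      have hca : ContinuousAt (g 0) z₀ :=
        ((hd 0).differentiableAt (hU.mem_nhds hz₀U)).continuousAt
      have hev : ∀ᶠ z in nhds z₀, g 0 z ≠ 0 ∧ z ∈ U :=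
        (hca.eventually_ne hz₀).and (hU.eventually_mem hz₀U)
      obtain ⟨r, hr, hball⟩ := Metric.eventually_nhds_iff_ball.1 hev
      set D : Set ℂ := ball z₀ r with hD
      have hDo : IsOpen D := isOpen_ball
      have hDne : z₀ ∈ D := mem_ball_self hr
      have hDU : D ⊆ U := fun z hz => (hball z hz).2
      have hDg0 : ∀ z ∈ D, g 0 z ≠ 0 := fun z hz => (hball z hz).1
      -- the quotients
      set p : Fin (n + 1) → ℂ → ℂ :=
        fun j => if j = 0 then (fun _ => (1 : ℂ)) else fun z => g j z / g 0 z with hp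
      have hpd : ∀ j, DifferentiableOn ℂ (p j) D := by
        intro j
        by_cases hj : j = 0
        · simp only [hp, if_pos hj]; exact differentiableOn_const 1
        · simp only [hp, if_neg hj]
          exact ((hd j).mono hDU).div ((hd 0).mono hDU) hDg0
      have hgp : ∀ j, Set.EqOn (g j) (fun w => g 0 w * p j (id w)) D := by
        intro j z hz
        by_cases hj : j = 0
        · simp [hp, hj]
        · simp only [hp, if_neg hj, id]
          rw [mul_div_cancel₀ _ (hDg0 z hz)]
      -- Wronskian of p vanishes on D
      have hWp : ∀ z ∈ D, Matrix.det
          (Matrix.of fun i j : Fin (n + 1) => iteratedDeriv (i : ℕ) (p j) z) = 0 := by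
        intro z hz
        have h1 : Matrix.det (Matrix.of fun i j : Fin (n + 1) => iteratedDeriv (i : ℕ) (g j) z)
            = Matrix.det (Matrix.of fun i j : Fin (n + 1) =>
                iteratedDeriv (i : ℕ) (fun w => g 0 w * p j (id w)) z) := by
          congr 1
          ext i j
          exact Set.EqOn.iteratedDeriv_of_isOpen (hgp j) hDo (i : ℕ) hz
        have h2 := det_chain hDo ((hd 0).mono hDU) differentiableOn_id (Set.mapsTo_id D)
          p hpd hz
        have h3 := hW z (hDU hz)
        rw [h1, h2] at h3
        have hprod : (∏ i ∈ Finset.range (n + 1), (g 0 z * (deriv id z) ^ i)) ≠ 0 := by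
          apply Finset.prod_ne_zero_iff.2
          intro i _
          simp [deriv_id]
          exact hDg0 z hz
        simpa [id] using (mul_eq_zero.1 h3).resolve_left hprod
      -- expand along column 0
      have hWh : ∀ z ∈ D, Matrix.det (Matrix.of fun i j : Fin n =>
          iteratedDeriv (i : ℕ) (fun w => deriv (p j.succ) w) z) = 0 := by
        intro z hz
        have hcol : ∀ i : Fin (n + 1),
            (Matrix.of fun i j : Fin (n + 1) => iteratedDeriv (i : ℕ) (p j) z) i 0
            = if i = 0 then 1 else 0 := by
          intro i
          show iteratedDeriv (i : ℕ) (p 0) z = _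
          rw [show p 0 = fun _ => (1:ℂ) by simp [hp]]
          rw [itD_const 1 (i : ℕ) z]
          by_cases hi : i = 0
          · simp [hi]
          · rw [if_neg (fun h : (i : ℕ) = 0 => hi (Fin.ext h)), if_neg hi]
        have hexp := Matrix.det_succ_column_zero
          (Matrix.of fun i j : Fin (n + 1) => iteratedDeriv (i : ℕ) (p j) z)
        rw [hWp z hz] at hexp
        rw [Finset.sum_eq_single (0 : Fin (n + 1)) (fun i _ hi => by
            rw [hcol i, if_neg hi]; ring) (by simp)] at hexp
        rw [hcol 0, if_pos rfl] at hexp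
        simp only [Fin.val_zero, pow_zero, one_mul, mul_one] at hexp
        have hsub : ((Matrix.of fun i j : Fin (n + 1) => iteratedDeriv (i : ℕ) (p j) z).submatrix
            (Fin.succAbove 0) Fin.succ)
            = Matrix.of fun i j : Fin n =>
                iteratedDeriv (i : ℕ) (fun w => deriv (p j.succ) w) z := by
          ext i j
          show iteratedDeriv ((Fin.succAbove 0 i : Fin (n+1)) : ℕ) (p j.succ) z = _
          rw [Fin.succAbove_zero]
          show iteratedDeriv ((i : ℕ) + 1) (p j.succ) z = _
          rw [iteratedDeriv_succ']
          rfl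
        rw [hsub] at hexp
        exact hexp.symm
      -- apply IH on D
      have hhd : ∀ j : Fin n, DifferentiableOn ℂ (fun w => deriv (p j.succ) w) D := by
        intro j
        exact ((hpd j.succ).analyticOnNhd hDo).deriv.differentiableOn
      obtain ⟨c, hc, hcsum⟩ := IH D hDo (convex_ball z₀ r).isPreconnected ⟨z₀, hDne⟩
        (fun j => fun w => deriv (p j.succ) w) hhd hWh
      -- q is constant on D
      set q : ℂ → ℂ := fun z => ∑ j : Fin n, c j * p j.succ z with hq
      have hqd : ∀ z ∈ D, HasDerivAt q 0 z := by
        intro z hz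
        have : HasDerivAt q (∑ j : Fin n, c j * deriv (p j.succ) z) z := by
          apply HasDerivAt.fun_sum
          intro j _
          exact (((hpd j.succ).differentiableAt (hDo.mem_nhds hz)).hasDerivAt).const_mul (c j)
        rwa [hcsum z hz] at this
      have hqconst : ∀ z ∈ D, q z = q z₀ := by
        intro z hz
        apply Convex.is_const_of_fderivWithin_eq_zero (convex_ball z₀ r)
          (fun w hw => ((hqd w hw).differentiableAt).differentiableWithinAt)
          (fun w hw => ?_) hz hDne
        rw [fderivWithin_of_isOpen hDo hw]
        have := (hqd w hw).hasFDerivAt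
        rw [this.fderiv]
        ext v
        simp
      set C : ℂ := q z₀ with hC
      -- the final combination
      set c' : Fin (n + 1) → ℂ := fun j => Fin.cases (-C) c j with hc'
      have hc'0 : c' 0 = -C := rfl
      have hc's : ∀ j : Fin n, c' j.succ = c j := fun j => rfl
      have hc'ne : c' ≠ 0 := by
        intro h
        apply hc
        funext j
        have := congrFun h j.succ
        simpa [hc's] using this
      have hcomb : ∀ z ∈ D, ∑ j, c' j * g j z = 0 := by
        intro z hz
        rw [Fin.sum_univ_succ]
        have : ∀ j : Fin n, c' j.succ * g j.succ z = g 0 z * (c j * p j.succ z) := by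
          intro j
          rw [hc's, hgp j.succ hz]
          simp only [id_eq]; ring
        rw [Finset.sum_congr rfl (fun j _ => this j), ← Finset.mul_sum]
        have hqz : ∑ j : Fin n, c j * p j.succ z = C := hqconst z hz
        rw [hqz, hc'0]
        ring
      -- analytic continuation to U
      have hGd : DifferentiableOn ℂ (fun z => ∑ j, c' j * g j z) U := by
        apply DifferentiableOn.fun_sum
        intro j _
        exact ((hd j).const_mul (c' j))
      have hGa := hGd.analyticOnNhd hU
      have h0a : AnalyticOnNhd ℂ (fun _ : ℂ => (0 : ℂ)) U := analyticOnNhd_const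
      have heq : Set.EqOn (fun z => ∑ j, c' j * g j z) (fun _ => 0) U := by
        apply hGa.eqOn_of_preconnected_of_eventuallyEq h0a hUc (hDU hDne)
        exact Filter.eventuallyEq_of_mem (hDo.mem_nhds hDne) hcomb
      exact ⟨c', hc'ne, fun z hz => heq hz⟩

open Complex Matrix Filter Asymptotics Finset Set Metric UpperHalfPlane
open scoped ModularForm MatrixGroups Manifold

lemma ext_apply_pos (g : ℍ → ℂ) {z : ℂ} (hz : 0 < z.im) : ext g z = g (UpperHalfPlane.mk z hz) :=
  dif_pos hz

lemma ext_coe (g : ℍ → ℂ) (τ : ℍ) : ext g (τ : ℂ) = g τ :=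
  dif_pos τ.2

lemma mem_S_coe (τ : ℍ) : (τ : ℂ) ∈ S := τ.2

lemma ext_diffOn {g : ℍ → ℂ} (hg : MDifferentiable 𝓘(ℂ) 𝓘(ℂ) g) :
    DifferentiableOn ℂ (ext g) S := by
  apply (UpperHalfPlane.mdifferentiable_iff.mp hg).congr
  intro z hz
  rw [ext_apply_pos g hz]
  simp only [Function.comp_apply, ofComplex_apply_of_im_pos hz]

lemma ext_exBdd {g : ℍ → ℂ} (hb : UpperHalfPlane.IsBoundedAtImInfty g) : ExBdd (ext g) := by
  obtain ⟨M, A, hMA⟩ := UpperHalfPlane.isBoundedAtImInfty_iff.1 hb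
  refine ⟨max M 1, max A 1, by positivity, le_max_right _ _, fun z hz => ?_⟩
  have him : 0 < z.im := lt_of_lt_of_le one_pos (le_trans (le_max_right _ _) hz)
  rw [ext_apply_pos g him]
  refine le_trans (hMA ⟨z, him⟩ ?_) (le_max_left _ _)
  exact le_trans (le_max_left _ _) hz

lemma tendsto_coe_imF : Tendsto (fun τ : ℍ => (τ : ℂ)) atImInfty imF := by
  rw [imF, tendsto_comap_iff]
  have : (Complex.im ∘ fun τ : ℍ => (τ : ℂ)) = UpperHalfPlane.im := by
    funext τ; exact UpperHalfPlane.coe_im τ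
  rw [this]
  exact tendsto_comap

section SlashA

variable (A : SL(2, ℤ)) (m : ℤ)

/-- bottom-row affine function of an `SL(2, ℤ)` matrix -/
def dA (A : SL(2, ℤ)) : ℂ → ℂ := fun z => (A 1 0 : ℂ) * z + (A 1 1 : ℂ)
def nA (A : SL(2, ℤ)) : ℂ → ℂ := fun z => (A 0 0 : ℂ) * z + (A 0 1 : ℂ)
noncomputable def φA (A : SL(2, ℤ)) : ℂ → ℂ := fun z => nA A z / dA A z
noncomputable def uA (A : SL(2, ℤ)) (m : ℤ) : ℂ → ℂ := fun z => dA A z ^ (-m)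

lemma dA_eq_denom (τ : ℍ) : dA A (τ : ℂ) = denom (↑A) τ := by
  rw [ModularGroup.denom_apply, dA]

lemma nA_eq_num (τ : ℍ) : nA A (τ : ℂ) = num (↑A) τ := by
  simp [nA, num, UpperHalfPlane.coe]

lemma dA_ne_zero {z : ℂ} (hz : z ∈ S) : dA A z ≠ 0 := by
  have : dA A ((UpperHalfPlane.mk z hz : ℍ) : ℂ) = denom (↑A) (UpperHalfPlane.mk z hz) := dA_eq_denom A (UpperHalfPlane.mk z hz)
  rw [show ((UpperHalfPlane.mk z hz : ℍ) : ℂ) = z from rfl] at this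
  rw [this]
  exact UpperHalfPlane.denom_ne_zero _ (UpperHalfPlane.mk z hz)

lemma φA_coe (τ : ℍ) : φA A (τ : ℂ) = ((A • τ : ℍ) : ℂ) := by
  rw [ModularGroup.sl_moeb, UpperHalfPlane.coe_smul_of_det_pos (by simp), φA, nA_eq_num, dA_eq_denom]

lemma φA_mapsTo : Set.MapsTo (φA A) S S := by
  intro z hz
  have h2 : φA A z = ((A • UpperHalfPlane.mk z hz : ℍ) : ℂ) := φA_coe A (UpperHalfPlane.mk z hz)
  rw [h2]
  exact mem_S_coe _

lemma dA_hasDeriv (z : ℂ) : HasDerivAt (dA A) (A 1 0 : ℂ) z := by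
  unfold dA; simpa using ((hasDerivAt_id z).const_mul (A 1 0 : ℂ)).add_const (A 1 1 : ℂ)

lemma nA_hasDeriv (z : ℂ) : HasDerivAt (nA A) (A 0 0 : ℂ) z := by
  unfold nA; simpa using ((hasDerivAt_id z).const_mul (A 0 0 : ℂ)).add_const (A 0 1 : ℂ)

lemma det_A_complex : (A 0 0 : ℂ) * (A 1 1 : ℂ) - (A 0 1 : ℂ) * (A 1 0 : ℂ) = 1 := by
  have h := A.2
  rw [Matrix.det_fin_two] at h
  have : ((A.1 0 0 * A.1 1 1 - A.1 0 1 * A.1 1 0 : ℤ) : ℂ) = ((1 : ℤ) : ℂ) := by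
    exact_mod_cast congrArg (fun x : ℤ => (x : ℂ)) h
  push_cast at this
  convert this using 2 <;> rfl

lemma φA_hasDeriv {z : ℂ} (hz : z ∈ S) :
    HasDerivAt (φA A) (dA A z ^ (-2 : ℤ)) z := by
  have h := (nA_hasDeriv A z).div (dA_hasDeriv A z) (dA_ne_zero A hz)
  have heq : ((A 0 0 : ℂ) * dA A z - nA A z * (A 1 0 : ℂ)) / dA A z ^ 2
      = dA A z ^ (-2 : ℤ) := by
    have hnum : (A 0 0 : ℂ) * dA A z - nA A z * (A 1 0 : ℂ) = 1 := by
      rw [dA, nA]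
      have := det_A_complex A
      ring_nf
      ring_nf at this
      linear_combination this
    rw [hnum, one_div, ← zpow_natCast (dA A z) 2, ← _root_.zpow_neg]
    norm_num
  rw [heq] at h
  exact h

lemma uA_diffOn : DifferentiableOn ℂ (uA A m) S := by
  intro z hz
  apply DifferentiableAt.differentiableWithinAt
  exact ((dA_hasDeriv A z).differentiableAt).zpow (Or.inl (dA_ne_zero A hz))

lemma φA_diffOn : DifferentiableOn ℂ (φA A) S :=
  fun z hz => ((φA_hasDeriv A hz).differentiableAt).differentiableWithinAt

end SlashA
open Complex Matrix Filter Asymptotics Finset Set Metric UpperHalfPlane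
open scoped ModularForm MatrixGroups Manifold

lemma slash_apply (mm : ℤ) (A : SL(2, ℤ)) (g : ℍ → ℂ) (τ : ℍ) :
    (g ∣[mm] A) τ = g (A • τ) * denom (↑A) τ ^ (-mm) := by
  exact ModularForm.SL_slash_apply (f := g) (k := mm) A τ

lemma ext_slash (mm : ℤ) (A : SL(2, ℤ)) (g : ℍ → ℂ) {z : ℂ} (hz : z ∈ S) :
    ext (g ∣[mm] A) z = uA A mm z * ext g (φA A z) := by
  rw [ext_apply_pos _ hz, slash_apply]
  have h1 : φA A z = ((A • UpperHalfPlane.mk z hz : ℍ) : ℂ) := φA_coe A (UpperHalfPlane.mk z hz)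
  rw [h1, ext_coe]
  have h2 : uA A mm z = denom (↑A) (UpperHalfPlane.mk z hz) ^ (-mm) := by
    rw [uA]
    congr 1
  rw [h2]
  try rw [mul_comm]

lemma prod_pow_eq {x : ℂ} (hx : x ≠ 0) (m : ℤ) (k : ℕ) :
    ∏ i ∈ Finset.range k, (x ^ (-m) * (x ^ (-2 : ℤ)) ^ i)
      = x ^ (-((k : ℤ) * (m + k - 1))) := by
  induction k with
  | zero => simp
  | succ k ih =>
    rw [Finset.prod_range_succ, ih]
    rw [← zpow_natCast (x ^ (-2 : ℤ)) k, ← _root_.zpow_mul, ← zpow_add₀ hx, ← zpow_add₀ hx]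
    congr 1
    push_cast
    ring

lemma diffOn_det {k : ℕ} {s : Set ℂ} (M : ℂ → Matrix (Fin k) (Fin k) ℂ)
    (hM : ∀ i j, DifferentiableOn ℂ (fun z => M z i j) s) :
    DifferentiableOn ℂ (fun z => (M z).det) s := by
  have heq : (fun z => (M z).det) = fun z => ∑ σ : Equiv.Perm (Fin k),
      ((Equiv.Perm.sign σ : ℤ) : ℂ) * ∏ i, M z (σ i) i := by
    funext z
    rw [Matrix.det_apply]
    apply Finset.sum_congr rfl
    intro σ _
    rw [Units.smul_def, zsmul_eq_mul]
  rw [heq]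
  apply DifferentiableOn.fun_sum
  intro σ _
  apply DifferentiableOn.const_mul
  apply DifferentiableOn.fun_finsetProd
  intro i _
  exact hM (σ i) i

section Wslash

variable {k : ℕ} (m : ℤ) (f : Fin k → ℍ → ℂ)

lemma Wslash (hd : ∀ j, DifferentiableOn ℂ (ext (f j)) S) (A : SL(2, ℤ)) (τ : ℍ) :
    Matrix.det (Matrix.of fun i j : Fin k =>
        iteratedDeriv (i : ℕ) (ext (f j ∣[m] A)) (τ : ℂ))
      = denom (↑A) τ ^ (-((k : ℤ) * (m + k - 1))) *
        Matrix.det (Matrix.of fun i j : Fin k =>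
          iteratedDeriv (i : ℕ) (ext (f j)) ((A • τ : ℍ) : ℂ)) := by
  have hmem : (τ : ℂ) ∈ S := mem_S_coe τ
  have h1 : Matrix.det (Matrix.of fun i j : Fin k =>
      iteratedDeriv (i : ℕ) (ext (f j ∣[m] A)) (τ : ℂ))
      = Matrix.det (Matrix.of fun i j : Fin k =>
        iteratedDeriv (i : ℕ) (fun w => uA A m w * ext (f j) (φA A w)) (τ : ℂ)) := by
    congr 1
    ext i j
    exact Set.EqOn.iteratedDeriv_of_isOpen
      (fun z hz => ext_slash m A (f j) hz) isOpen_S (i : ℕ) hmem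
  rw [h1]
  rw [det_chain isOpen_S (uA_diffOn A m) (φA_diffOn A) (φA_mapsTo A)
    (fun j => ext (f j)) hd hmem]
  have hder : deriv (φA A) (τ : ℂ) = dA A (τ : ℂ) ^ (-2 : ℤ) :=
    (φA_hasDeriv A hmem).deriv
  have hprod : (∏ i ∈ Finset.range k, (uA A m (τ : ℂ) * deriv (φA A) (τ : ℂ) ^ i))
      = denom (↑A) τ ^ (-((k : ℤ) * (m + k - 1))) := by
    rw [hder]
    have := prod_pow_eq (x := dA A (τ : ℂ)) (dA_ne_zero A hmem) m k
    rw [show uA A m = fun z => dA A z ^ (-m) from rfl]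
    rw [this]
    congr 1
  rw [hprod, φA_coe A τ]

end Wslash

end WronskAux

open WronskAux Complex Matrix Filter Asymptotics Finset Set Metric
open scoped ModularForm MatrixGroups Manifold

/-- Let `f₁,…,f_k` (`k ≥ 2`) be linearly independent holomorphic
modular forms of weight `m` for a Fuchsian group of the first kind
`Γ` (a finite-index subgroup of `SL(2,ℤ)`).  Then the Wronskian
`W(f₁,…,f_k)(z) = det (d^{i-1}fⱼ/dz^{i-1}(z))` is a nonzero cusp form of weight
`k(m+k-1)` for `Γ`. -/
theorem wronskian_is_nonzero_cusp_form
    (Γ : Subgroup (Matrix.SpecialLinearGroup (Fin 2) ℤ)) (hΓ : Γ.index ≠ 0)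
    (m : ℤ) (hm : 1 ≤ m) (k : ℕ) (hk : 2 ≤ k)
    (f : Fin k → ModularForm Γ m) (hli : LinearIndependent ℂ f) :
    ∃ F : CuspForm Γ ((k : ℤ) * (m + k - 1)),
      (∀ τ : UpperHalfPlane, F τ = Matrix.det
        (Matrix.of fun i j : Fin k =>
          iteratedDerivWithin (i : ℕ) (ext (f j)) {z : ℂ | 0 < z.im} (τ : ℂ))) ∧
      F ≠ 0 := by
  classical
  haveI : Γ.FiniteIndex := ⟨hΓ⟩
  set κ : ℤ := (k : ℤ) * (m + k - 1) with hκ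
  have hd : ∀ j, DifferentiableOn ℂ (ext ⇑(f j)) S := fun j => ext_diffOn (f j).holo'
  set WM : ℍ → ℂ := fun τ => Matrix.det
    (Matrix.of fun i j : Fin k => iteratedDeriv (i : ℕ) (ext ⇑(f j)) (τ : ℂ)) with hWM
  -- the key slash identity
  have key : ∀ (A : SL(2, ℤ)) (τ : ℍ), (WM ∣[κ] A) τ = Matrix.det
      (Matrix.of fun i j : Fin k =>
        iteratedDeriv (i : ℕ) (ext (⇑(f j) ∣[m] A)) (τ : ℂ)) := by
    intro A τ
    rw [slash_apply κ A WM τ, Wslash m (fun j => ⇑(f j)) hd A τ]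
    rw [hWM]
    exact (mul_comm _ _).symm
  -- slash invariance
  have hslashinv : ∀ γ ∈ (Γ : Subgroup (GL (Fin 2) ℝ)), WM ∣[κ] γ = WM := by
    intro γ hγ
    obtain ⟨γ, hγ, rfl⟩ := Subgroup.mem_map.1 hγ
    change WM ∣[κ] γ = WM
    funext τ
    rw [key γ τ]
    have hfs : ∀ j, ⇑(f j) ∣[m] γ = ⇑(f j) := fun j =>
      (f j).toSlashInvariantForm.slash_action_eq' _ hγ
    rw [hWM]
    congr 1
    ext i j
    simp only [Matrix.of_apply]
    rw [hfs j]
  -- holomorphy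
  have hholo : MDifferentiable 𝓘(ℂ) 𝓘(ℂ) WM := by
    rw [UpperHalfPlane.mdifferentiable_iff]
    have hdet : DifferentiableOn ℂ (fun z : ℂ => Matrix.det
        (Matrix.of fun i j : Fin k => iteratedDeriv (i : ℕ) (ext ⇑(f j)) z)) S := by
      apply diffOn_det
      intro i j
      exact diffItD isOpen_S (hd j) (i : ℕ)
    apply hdet.congr
    intro z hz
    show WM (ofComplex z) = _
    rw [ofComplex_apply_of_im_pos hz]
  -- zero at infinity
  have hzero : ∀ A : SL(2, ℤ), IsZeroAtImInfty (WM ∣[κ] A) := by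
    intro A
    have hdg : ∀ j, DifferentiableOn ℂ (ext (⇑(f j) ∣[m] A)) S := by
      intro j
      apply DifferentiableOn.congr
        ((uA_diffOn A m).mul ((hd j).comp (φA_diffOn A) (φA_mapsTo A)))
      intro z hz
      exact ext_slash m A ⇑(f j) hz
    have hbg : ∀ j, ExBdd (ext (⇑(f j) ∣[m] A)) := fun j =>
      ext_exBdd (ModularFormClass.bdd_at_infty_slash (f j) A)
    have hdet := tendsto_det_zero hk (fun j => ext (⇑(f j) ∣[m] A)) hdg hbg
    have htend := hdet.comp tendsto_coe_imF
    have : (WM ∣[κ] A) = fun τ : ℍ => Matrix.det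
        (Matrix.of fun i j : Fin k =>
          iteratedDeriv (i : ℕ) (ext (⇑(f j) ∣[m] A)) (τ : ℂ)) := funext (key A)
    rw [this]
    exact htend
  set Fc : CuspForm Γ κ :=
    { toFun := WM
      slash_action_eq' := hslashinv
      holo' := hholo
      zero_at_cusps' := fun hc => (OnePoint.isZeroAt_iff_forall_SL2Z
        ((Subgroup.IsArithmetic.isCusp_iff_isCusp_SL2Z _).1 hc)).2 fun γ _ => hzero γ } with hFc
  have hFval : ∀ τ : ℍ, Fc τ = Matrix.det
      (Matrix.of fun i j : Fin k =>
        iteratedDerivWithin (i : ℕ) (ext (f j)) {z : ℂ | 0 < z.im} (τ : ℂ)) := by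
    intro τ
    show Matrix.det (Matrix.of fun i j : Fin k =>
      iteratedDeriv (i : ℕ) (ext ⇑(f j)) (τ : ℂ)) = _
    congr 1
    ext i j
    simp only [Matrix.of_apply]
    exact (itDW isOpen_S (ext ⇑(f j)) (i : ℕ) (τ : ℂ) (mem_S_coe τ)).symm
  refine ⟨Fc, hFval, ?_⟩
  -- nonvanishing
  intro hFzero
  have hW0 : ∀ z ∈ S, Matrix.det
      (Matrix.of fun i j : Fin k => iteratedDeriv (i : ℕ) (ext ⇑(f j)) z) = 0 := by
    intro z hz
    have h1 : Fc (UpperHalfPlane.mk z hz) = 0 := by rw [hFzero]; rfl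
    have h2 : Fc (UpperHalfPlane.mk z hz) = WM (UpperHalfPlane.mk z hz) := rfl
    rw [h2] at h1
    rw [hWM] at h1
    exact h1
  have hSpre : IsPreconnected S := (convex_halfSpace_im_gt 0).isPreconnected
  have hSne : S.Nonempty := ⟨Complex.I, by simp [S]⟩
  obtain ⟨c, hcne, hcsum⟩ := wronskian_ne_zero k S isOpen_S hSpre hSne
    (fun j => ext ⇑(f j)) hd hW0
  have hzero' : (∑ j, c j • f j) = 0 := by
    apply DFunLike.ext
    intro τ
    have hcoe : (∑ j, c j • f j) τ = ∑ j, c j * (f j) τ := by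
      rw [show ((∑ j, c j • f j : ModularForm Γ m) : ℍ → ℂ)
          = ∑ j, ((c j • f j : ModularForm Γ m) : ℍ → ℂ) from
        map_sum (⟨⟨fun g : ModularForm Γ m => (g : ℍ → ℂ), rfl⟩, fun _ _ => rfl⟩ :
          ModularForm Γ m →+ (ℍ → ℂ)) _ _]
      rw [Finset.sum_apply]
      apply Finset.sum_congr rfl
      intro j _
      rfl
    rw [hcoe]
    have := hcsum (τ : ℂ) (mem_S_coe τ)
    simp only [ext_coe] at this
    simpa using this
  have := Fintype.linearIndependent_iff.1 hli c hzero'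
  exact hcne (funext this)
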